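/- (Chevalley criterion, Cat version, 'only if' direction) Let f : A ⥤ B be a Grothendieck fibration (with a chosen cleavage). Then the canonical functor f₁ : (A ↓ A) ⥤ (B ↓ f), sending α : a₀ ⟶ a₁ to (f a₀, a₁, f α), admits a right adjoint whose counit is an identity natural transformation. -/

import Mathlib

open CategoryTheory

universe v₁ v₂ u₁ u₂

variable {A : Type u₁} {B : Type u₂} [Category.{v₁} A] [Category.{v₂} B]

/-- `α : a' ⟶ a` is `f`-cartesian. -/
def IsCartesian (f : A ⥤ B) {a' a : A} (α : a' ⟶ a) : Prop :=
  ∀ {y : A} (τ' : y ⟶ a) (g : f.obj y ⟶ f.obj a'),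
    f.map τ' = g ≫ f.map α →
      ∃! τ : y ⟶ a', f.map τ = g ∧ τ ≫ α = τ'

/-- `f` is a Grothendieck fibration. -/
def IsGrothendieckFibration (f : A ⥤ B) : Prop :=
  ∀ (a : A) (b : B) (β : b ⟶ f.obj a),
    ∃ (a' : A) (α : a' ⟶ a) (h : f.obj a' = b),
      f.map α = eqToHom h ≫ β ∧ IsCartesian f α

/-- The canonical functor `f₁ : (A ↓ A) ⥤ (B ↓ f)` sending `α : a₀ ⟶ a₁` to
`(f a₀, a₁, f α)`. -/
def fOne (f : A ⥤ B) : Arrow A ⥤ Comma (𝟭 B) f where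
  obj α := { left := f.obj α.left, right := α.right, hom := f.map α.hom }
  map {X Y} u :=
    { left := f.map u.left
      right := u.right
      w := by
        dsimp
        rw [← f.map_comp, ← f.map_comp, Arrow.w] }

namespace Chev

variable (f : A ⥤ B) (hf : IsGrothendieckFibration f)

noncomputable def L0 (X : Comma (𝟭 B) f) : A := (hf X.right X.left X.hom).choose

noncomputable def Lhom (X : Comma (𝟭 B) f) : L0 f hf X ⟶ X.right :=
  (hf X.right X.left X.hom).choose_spec.choose

lemma Leq (X : Comma (𝟭 B) f) : f.obj (L0 f hf X) = X.left :=
  (hf X.right X.left X.hom).choose_spec.choose_spec.choose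

lemma Lcomm (X : Comma (𝟭 B) f) :
    f.map (Lhom f hf X) = eqToHom (Leq f hf X) ≫ X.hom :=
  (hf X.right X.left X.hom).choose_spec.choose_spec.choose_spec.1

lemma Lcart (X : Comma (𝟭 B) f) : IsCartesian f (Lhom f hf X) :=
  (hf X.right X.left X.hom).choose_spec.choose_spec.choose_spec.2

lemma mapSpec {X Y : Comma (𝟭 B) f} (u : X ⟶ Y) :
    f.map (Lhom f hf X ≫ u.right) =
      (eqToHom (Leq f hf X) ≫ u.left ≫ eqToHom (Leq f hf Y).symm) ≫ f.map (Lhom f hf Y) := by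
  have hw := u.w
  dsimp at hw
  rw [f.map_comp, Lcomm, Lcomm]
  simp [← hw]

noncomputable def Lτ {X Y : Comma (𝟭 B) f} (u : X ⟶ Y) : L0 f hf X ⟶ L0 f hf Y :=
  (Lcart f hf Y (Lhom f hf X ≫ u.right) _ (mapSpec f hf u)).choose

lemma Lτ_map {X Y : Comma (𝟭 B) f} (u : X ⟶ Y) :
    f.map (Lτ f hf u) = eqToHom (Leq f hf X) ≫ u.left ≫ eqToHom (Leq f hf Y).symm :=
  (Lcart f hf Y (Lhom f hf X ≫ u.right) _ (mapSpec f hf u)).choose_spec.1.1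

lemma Lτ_comm {X Y : Comma (𝟭 B) f} (u : X ⟶ Y) :
    Lτ f hf u ≫ Lhom f hf Y = Lhom f hf X ≫ u.right :=
  (Lcart f hf Y (Lhom f hf X ≫ u.right) _ (mapSpec f hf u)).choose_spec.1.2

lemma Lτ_unique {X Y : Comma (𝟭 B) f} (u : X ⟶ Y) (τ : L0 f hf X ⟶ L0 f hf Y)
    (h1 : f.map τ = eqToHom (Leq f hf X) ≫ u.left ≫ eqToHom (Leq f hf Y).symm)
    (h2 : τ ≫ Lhom f hf Y = Lhom f hf X ≫ u.right) : τ = Lτ f hf u :=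
  (Lcart f hf Y (Lhom f hf X ≫ u.right) _ (mapSpec f hf u)).choose_spec.2 τ ⟨h1, h2⟩

noncomputable def R : Comma (𝟭 B) f ⥤ Arrow A where
  obj X := Arrow.mk (Lhom f hf X)
  map u := Arrow.homMk (u := Lτ f hf u) (v := u.right) (Lτ_comm f hf u)
  map_id X := by
    apply CommaMorphism.ext
    · exact ((Lτ_unique f hf (𝟙 X) (𝟙 _) (by simp) (by simp))).symm
    · rfl
  map_comp {X Y Z} u v := by
    apply CommaMorphism.ext
    · refine ((Lτ_unique f hf (u ≫ v) (Lτ f hf u ≫ Lτ f hf v) ?_ ?_)).symm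
      · rw [f.map_comp, Lτ_map, Lτ_map]; simp
      · rw [Category.assoc, Lτ_comm, ← Category.assoc, Lτ_comm]; simp
    · rfl

lemma comma_ext {X Y : Comma (𝟭 B) f} (h1 : X.left = Y.left) (h2 : X.right = Y.right)
    (h3 : X.hom = eqToHom h1 ≫ Y.hom ≫ eqToHom (by rw [h2])) : X = Y := by
  obtain ⟨a, b, c⟩ := X
  obtain ⟨d, e, g⟩ := Y
  dsimp at h1 h2 h3
  subst h1; subst h2
  simp at h3
  subst h3
  rfl

lemma Rw : R f hf ⋙ fOne f = 𝟭 (Comma (𝟭 B) f) := by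
  refine CategoryTheory.Functor.ext ?_ ?_
  · intro X
    refine comma_ext f (Leq f hf X) rfl ?_
    show f.map (Lhom f hf X) = _
    rw [Lcomm f hf X]
    simp
    erw [eqToHom_refl, Category.comp_id]
    rfl
  · intro X Y u
    apply CommaMorphism.ext
    · simp only [Functor.comp_map, Functor.id_map, Comma.comp_left, Comma.eqToHom_left]
      exact Lτ_map f hf u
    · simp only [Functor.comp_map, Functor.id_map, Comma.comp_right, Comma.eqToHom_right]
      simp
      erw [eqToHom_refl, eqToHom_refl, Category.id_comp, Category.comp_id]
      rfl

lemma ηSpec (α : Arrow A) :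
    f.map α.hom = eqToHom (Leq f hf ((fOne f).obj α)).symm ≫
      f.map (Lhom f hf ((fOne f).obj α)) := by
  rw [Lcomm]
  simp
  rfl

noncomputable def ηu (α : Arrow A) : α.left ⟶ L0 f hf ((fOne f).obj α) :=
  (Lcart f hf ((fOne f).obj α) (show α.left ⟶ ((fOne f).obj α).right from α.hom)
    (eqToHom (Leq f hf ((fOne f).obj α)).symm) (ηSpec f hf α)).choose

lemma ηu_map (α : Arrow A) :
    f.map (ηu f hf α) = eqToHom (Leq f hf ((fOne f).obj α)).symm :=
  (Lcart f hf ((fOne f).obj α) (show α.left ⟶ ((fOne f).obj α).right from α.hom)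
    (eqToHom (Leq f hf ((fOne f).obj α)).symm) (ηSpec f hf α)).choose_spec.1.1

lemma ηu_comm (α : Arrow A) :
    ηu f hf α ≫ Lhom f hf ((fOne f).obj α) = α.hom :=
  (Lcart f hf ((fOne f).obj α) (show α.left ⟶ ((fOne f).obj α).right from α.hom)
    (eqToHom (Leq f hf ((fOne f).obj α)).symm) (ηSpec f hf α)).choose_spec.1.2

noncomputable def η : 𝟭 (Arrow A) ⟶ fOne f ⋙ R f hf where
  app α := Arrow.homMk (u := ηu f hf α) (v := 𝟙 α.right)
    (by
      show ηu f hf α ≫ Lhom f hf ((fOne f).obj α) = α.hom ≫ 𝟙 α.right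
      rw [ηu_comm]; simp; rfl)
  naturality {α β} w := by
    have key : ∃! τ : α.left ⟶ L0 f hf ((fOne f).obj β),
        f.map τ = f.map w.left ≫ eqToHom (Leq f hf ((fOne f).obj β)).symm ∧
          τ ≫ Lhom f hf ((fOne f).obj β) = w.left ≫ β.hom := by
      refine Lcart f hf ((fOne f).obj β) (show α.left ⟶ ((fOne f).obj β).right from w.left ≫ β.hom) _ ?_
      show f.map (w.left ≫ β.hom) = _
      rw [f.map_comp, Lcomm]
      erw [Category.assoc, eqToHom_trans_assoc, eqToHom_refl, Category.id_comp]
      rfl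
    apply CommaMorphism.ext
    · show w.left ≫ ηu f hf β = ηu f hf α ≫ Lτ f hf ((fOne f).map w)
      refine key.unique ⟨?_, ?_⟩ ⟨?_, ?_⟩
      · rw [f.map_comp, ηu_map]; rfl
      · rw [Category.assoc, ηu_comm]; rfl
      · rw [f.map_comp, ηu_map, Lτ_map]
        erw [eqToHom_trans_assoc, eqToHom_refl, Category.id_comp]
        rfl
      · rw [Category.assoc, Lτ_comm, ← Category.assoc, ηu_comm]
        show α.hom ≫ w.right = w.left ≫ β.hom
        exact (Arrow.w w).symm
    · show w.right ≫ 𝟙 β.right = 𝟙 α.right ≫ w.right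
      simp

lemma Lhom_congr {X Y : Comma (𝟭 B) f} (e : X = Y) :
    Lhom f hf X = eqToHom (congrArg (L0 f hf) e) ≫ Lhom f hf Y ≫ eqToHom (by rw [e]) := by
  subst e; simp

lemma arrEqLeft {X Y : Arrow A} (h : X = Y) :
    CommaMorphism.left (eqToHom h) = eqToHom (by rw [h]) := by subst h; rfl

lemma arrEqRight {X Y : Arrow A} (h : X = Y) :
    CommaMorphism.right (eqToHom h) = eqToHom (by rw [h]) := by subst h; rfl

noncomputable def adj : fOne f ⊣ R f hf where
  unit := η f hf
  counit := eqToHom (Rw f hf)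
  left_triangle_components α := by
    rw [eqToHom_app]
    apply CommaMorphism.ext
    · simp only [Comma.comp_left, Comma.eqToHom_left, Comma.id_left]
      show f.map (ηu f hf α) ≫ _ = _
      rw [ηu_map]
      erw [eqToHom_trans]
      rfl
    · simp only [Comma.comp_right, Comma.eqToHom_right, Comma.id_right]
      show 𝟙 α.right ≫ _ = _
      erw [Category.id_comp]
      rfl
  right_triangle_components Y := by
    rw [eqToHom_app, eqToHom_map]
    apply CommaMorphism.ext
    · simp only [Arrow.comp_left, arrEqLeft, Arrow.id_left]
      show ηu f hf ((R f hf).obj Y) ≫ _ = 𝟙 (L0 f hf Y)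
      have e : (fOne f).obj ((R f hf).obj Y) = Y := Functor.congr_obj (Rw f hf) Y
      have key : ∃! τ : L0 f hf Y ⟶ L0 f hf Y,
          f.map τ = 𝟙 _ ∧ τ ≫ Lhom f hf Y = Lhom f hf Y :=
        Lcart f hf Y (Lhom f hf Y) (𝟙 _) (by simp)
      refine (key.unique ⟨?_, ?_⟩ ⟨by simp, by simp⟩)
      · erw [f.map_comp, ηu_map, eqToHom_map, eqToHom_trans]
        rfl
      · erw [Category.assoc]
        conv_lhs => rw [Lhom_congr f hf e.symm]
        erw [eqToHom_trans_assoc, eqToHom_refl, Category.id_comp]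
        erw [← Category.assoc, ηu_comm]
        exact Category.comp_id _
    · simp only [Arrow.comp_right, arrEqRight, Arrow.id_right]
      exact Category.id_comp _

end Chev

/-- (Chevalley criterion, `only if` direction) If `f` is a Grothendieck fibration, then the
canonical functor `f₁ : (A ↓ A) ⥤ (B ↓ f)` admits a right adjoint whose counit is an identity. -/
theorem stmt8 (f : A ⥤ B) (hf : IsGrothendieckFibration f) :
    ∃ (r : Comma (𝟭 B) f ⥤ Arrow A) (adj : fOne f ⊣ r)
      (w : r ⋙ fOne f = 𝟭 (Comma (𝟭 B) f)), adj.counit = eqToHom w :=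
  ⟨Chev.R f hf, Chev.adj f hf, Chev.Rw f hf, rfl⟩
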